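/- Let A be a commutative ring, and let B and C be commutative A-algebras. Assume B is a Noetherian unique factorization domain, C is flat and finitely generated as an A-algebra, and for every field K that is an A-algebra, the tensor product K ⊗_A C is a unique factorization domain whose units are exactly the images of the nonzero elements of K. Then B ⊗_A C is a unique factorization domain. -/

import Mathlib

open TensorProduct

universe u

section Nagata

variable {R : Type*} [CommRing R] [IsDomain R]

private lemma prime_multiset_split (m : Multiset R) (hm : ∀ p ∈ m, Prime p) :
    ∀ a b c : R, a * b = c * m.prod → ∃ a' b', a' ∣ a ∧ b' ∣ b ∧ a' * b' = c := by
  induction m using Multiset.induction_on with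
  | empty => exact fun a b c h => ⟨a, b, dvd_rfl, dvd_rfl, by simpa using h⟩
  | cons p m ih =>
    intro a b c h
    have hp : Prime p := hm p (Multiset.mem_cons_self p m)
    have hm' : ∀ q ∈ m, Prime q := fun q hq => hm q (Multiset.mem_cons_of_mem hq)
    rw [Multiset.prod_cons, ← mul_assoc] at h
    obtain ⟨a', b', ha', hb', hab⟩ := ih hm' a b (c * p) h
    have hpd : p ∣ a' * b' := hab ▸ dvd_mul_left p c
    rcases hp.dvd_or_dvd hpd with hd | hd
    · obtain ⟨a₂, rfl⟩ := hd
      exact ⟨a₂, b', (dvd_mul_left a₂ p).trans ha', hb',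
        mul_left_cancel₀ hp.ne_zero (by linear_combination hab)⟩
    · obtain ⟨b₂, rfl⟩ := hd
      exact ⟨a', b₂, ha', (dvd_mul_left b₂ p).trans hb',
        mul_left_cancel₀ hp.ne_zero (by linear_combination hab)⟩

private lemma prime_multiset_dvd {q : R} (hq : ∀ p : R, Prime p → ¬ p ∣ q)
    (m : Multiset R) (hm : ∀ p ∈ m, Prime p) :
    ∀ a x : R, q * a = x * m.prod → q ∣ x := by
  induction m using Multiset.induction_on with
  | empty => exact fun a x h => ⟨a, by simpa using h.symm⟩
  | cons p m ih =>
    intro a x h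
    have hp : Prime p := hm p (Multiset.mem_cons_self p m)
    have hm' : ∀ r ∈ m, Prime r := fun r hr => hm r (Multiset.mem_cons_of_mem hr)
    rw [Multiset.prod_cons] at h
    obtain ⟨d, hd⟩ := ih hm' a (x * p) (by linear_combination h)
    have hpd : p ∣ q * d := hd ▸ dvd_mul_left p x
    rcases hp.dvd_or_dvd hpd with h' | h'
    · exact absurd h' (hq p hp)
    · obtain ⟨e, rfl⟩ := h'
      exact ⟨e, mul_right_cancel₀ hp.ne_zero (by linear_combination hd)⟩

private lemma prime_multiset_not_dvd {q : R} (hqu : ¬ IsUnit q)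
    (hq : ∀ p : R, Prime p → ¬ p ∣ q) {u : R} (hu : IsUnit u)
    (m : Multiset R) (hm : ∀ p ∈ m, Prime p) : ¬ q ∣ u * m.prod := by
  induction m using Multiset.induction_on with
  | empty => intro hdvd; exact hqu (isUnit_of_dvd_unit (by simpa using hdvd) hu)
  | cons p m ih =>
    intro hdvd
    have hp : Prime p := hm p (Multiset.mem_cons_self p m)
    have hm' : ∀ r ∈ m, Prime r := fun r hr => hm r (Multiset.mem_cons_of_mem hr)
    obtain ⟨a, ha⟩ := hdvd
    rw [Multiset.prod_cons] at ha
    have hpd : p ∣ q * a := ⟨u * m.prod, by linear_combination -ha⟩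
    rcases hp.dvd_or_dvd hpd with h' | h'
    · exact absurd h' (hq p hp)
    · obtain ⟨e, rfl⟩ := h'
      exact ih hm' ⟨e, mul_left_cancel₀ hp.ne_zero (by linear_combination ha)⟩

/-- **Nagata's criterion**: if `R` is an atomic domain and `T` is a localization of `R`
at a multiplicative set whose elements are units times products of primes, and `T` is a UFD,
then `R` is a UFD. -/
theorem nagata_ufd {R : Type*} [CommRing R] [IsDomain R] [WfDvdMonoid R]
    (T : Type*) [CommRing T] [IsDomain T] [UniqueFactorizationMonoid T]
    [Algebra R T] (S : Submonoid R) [IsLocalization S T]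
    (hS : ∀ s ∈ S, ∃ u : R, ∃ m : Multiset R, IsUnit u ∧ (∀ p ∈ m, Prime p) ∧ s = u * m.prod) :
    UniqueFactorizationMonoid R := by
  have hS0 : S ≤ nonZeroDivisors R := by
    intro s hs
    obtain ⟨u, m, hu, hm, heq⟩ := hS s hs
    refine mem_nonZeroDivisors_of_ne_zero ?_
    rw [heq]
    exact mul_ne_zero hu.ne_zero (Multiset.prod_ne_zero fun h0 => (hm 0 h0).ne_zero rfl)
  have hinj : Function.Injective (algebraMap R T) := IsLocalization.injective T hS0
  refine { irreducible_iff_prime := fun {q} => ⟨fun hq => ?_, Prime.irreducible⟩ }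
  by_cases hex : ∃ p : R, Prime p ∧ p ∣ q
  · obtain ⟨p, hp, d, rfl⟩ := hex
    rcases hq.isUnit_or_isUnit rfl with h | h
    · exact absurd h hp.not_unit
    · exact ((associated_mul_unit_left p d h).symm).prime hp
  · push_neg at hex
    have hnd : ∀ p : R, Prime p → ¬ p ∣ q := fun p hp => hex p hp
    -- key: divisibility by q descends from T to R
    have descend : ∀ x : R, algebraMap R T q ∣ algebraMap R T x → q ∣ x := by
      intro x ⟨z, hz⟩
      obtain ⟨a, s, rfl⟩ := IsLocalization.exists_mk'_eq S z
      have h1 : algebraMap R T (x * s) = algebraMap R T (q * a) := by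
        rw [map_mul, map_mul, hz, mul_assoc, IsLocalization.mk'_spec]
      have h2 : x * s = q * a := hinj h1
      obtain ⟨u, m, hu, hm, heq⟩ := hS s s.2
      have h3 : q * a = (x * u) * m.prod := by rw [← h2, heq]; ring
      exact (hu.dvd_mul_right).mp (prime_multiset_dvd hnd m hm a (x * u) h3)
    have hqTnu : ¬ IsUnit (algebraMap R T q) := by
      intro h
      obtain ⟨v, hv⟩ := h
      have h1 : algebraMap R T q * ↑v⁻¹ = 1 := by rw [← hv]; exact v.mul_inv
      obtain ⟨a, s, hs⟩ := IsLocalization.exists_mk'_eq S (↑v⁻¹ : T)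
      have hspec : IsLocalization.mk' T a s * algebraMap R T (s : R) = algebraMap R T a :=
        IsLocalization.mk'_spec T a s
      rw [hs] at hspec
      have h2 : algebraMap R T (q * a) = algebraMap R T (s : R) := by
        rw [map_mul, ← hspec, ← mul_assoc, h1, one_mul]
      have h3 : q ∣ (s : R) := ⟨a, (hinj h2).symm⟩
      obtain ⟨u, m, hu, hm, heq⟩ := hS s s.2
      exact prime_multiset_not_dvd hq.not_isUnit hnd hu m hm (heq ▸ h3)
    have hq0 : q ≠ 0 := hq.ne_zero
    have hqT0 : algebraMap R T q ≠ 0 := fun h => hq0 (hinj (h.trans (map_zero _).symm))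
    have hqTirr : Irreducible (algebraMap R T q) := by
      refine ⟨hqTnu, fun z w hzw => ?_⟩
      obtain ⟨a, s₁, rfl⟩ := IsLocalization.exists_mk'_eq S z
      obtain ⟨b, s₂, rfl⟩ := IsLocalization.exists_mk'_eq S w
      have hsp₁ : IsLocalization.mk' T a s₁ * algebraMap R T (s₁ : R) = algebraMap R T a :=
        IsLocalization.mk'_spec T a s₁
      have hsp₂ : IsLocalization.mk' T b s₂ * algebraMap R T (s₂ : R) = algebraMap R T b :=
        IsLocalization.mk'_spec T b s₂
      have h1 : algebraMap R T (q * (s₁ * s₂)) = algebraMap R T (a * b) := by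
        simp only [map_mul]
        linear_combination algebraMap R T (s₁ : R) * algebraMap R T (s₂ : R) * hzw +
          IsLocalization.mk' T b s₂ * algebraMap R T (s₂ : R) * hsp₁ +
          algebraMap R T a * hsp₂
      have h2 : q * ((s₁ : R) * (s₂ : R)) = a * b := hinj h1
      obtain ⟨u, m, hu, hm, heq⟩ := hS ((s₁ : R) * (s₂ : R)) (mul_mem s₁.2 s₂.2)
      have h3 : a * b = (q * u) * m.prod := by rw [← h2, heq]; ring
      obtain ⟨a', b', ha', hb', hab⟩ := prime_multiset_split m hm a b (q * u) h3
      obtain ⟨v, rfl⟩ := hu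
      have hq' : q = a' * (b' * ↑v⁻¹) := by
        have h4 : a' * b' * ↑v⁻¹ = q * ↑v * ↑v⁻¹ := by rw [hab]
        rw [Units.mul_inv_cancel_right] at h4
        rw [← h4]; ring
      rcases hq.isUnit_or_isUnit hq' with h | h
      · -- a' is a unit, so q ∣ b, so the left factor is a unit
        left
        have hq'' : q = b' * (a' * ↑v⁻¹) := by rw [hq']; ring
        obtain ⟨w', hw'⟩ := h.mul (v⁻¹).isUnit
        rw [← hw'] at hq''
        have hqb : q ∣ b := dvd_trans
          ⟨↑w'⁻¹, by rw [hq'']; exact (Units.mul_inv_cancel_right b' w').symm⟩ hb'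
        have h4 : algebraMap R T q ∣ IsLocalization.mk' T b s₂ * algebraMap R T (s₂ : R) := by
          rw [hsp₂]; exact map_dvd _ hqb
        obtain ⟨e, he⟩ := ((IsLocalization.map_units T s₂).dvd_mul_right).mp h4
        have h6 : algebraMap R T q * 1 = algebraMap R T q * (IsLocalization.mk' T a s₁ * e) := by
          linear_combination hzw + IsLocalization.mk' T a s₁ * he
        exact IsUnit.of_mul_eq_one _ (mul_left_cancel₀ hqT0 h6).symm
      · -- b' * v⁻¹ is a unit, so q ∣ a, so the right factor is a unit
        right
        obtain ⟨w', hw'⟩ := h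
        rw [← hw'] at hq'
        have hqa : q ∣ a := dvd_trans
          ⟨↑w'⁻¹, by rw [hq']; exact (Units.mul_inv_cancel_right a' w').symm⟩ ha'
        have h4 : algebraMap R T q ∣ IsLocalization.mk' T a s₁ * algebraMap R T (s₁ : R) := by
          rw [hsp₁]; exact map_dvd _ hqa
        obtain ⟨e, he⟩ := ((IsLocalization.map_units T s₁).dvd_mul_right).mp h4
        have h6 : algebraMap R T q * 1 = algebraMap R T q * (IsLocalization.mk' T b s₂ * e) := by
          linear_combination hzw + IsLocalization.mk' T b s₂ * he
        exact IsUnit.of_mul_eq_one _ (mul_left_cancel₀ hqT0 h6).symm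
    have hqTprime : Prime (algebraMap R T q) :=
      UniqueFactorizationMonoid.irreducible_iff_prime.mp hqTirr
    refine ⟨hq0, hq.not_isUnit, fun x y hxy => ?_⟩
    have hT : algebraMap R T q ∣ algebraMap R T x * algebraMap R T y := by
      rw [← map_mul]; exact map_dvd _ hxy
    rcases hqTprime.2.2 _ _ hT with h | h
    · exact Or.inl (descend x h)
    · exact Or.inr (descend y h)

end Nagata
section TensorLemmas

variable {A B K C : Type u} [CommRing A] [CommRing B] [CommRing K] [CommRing C]
    [Algebra A B] [Algebra A K] [Algebra A C] [Module.Flat A C]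

private lemma tensor_map_injective (f : B →ₐ[A] K) (hf : Function.Injective f) :
    Function.Injective (Algebra.TensorProduct.map f (AlgHom.id A C)) := by
  have h2 : (Algebra.TensorProduct.map f (AlgHom.id A C)).toLinearMap
      = LinearMap.rTensor C f.toLinearMap := TensorProduct.ext' fun b c => by simp
  have h1 : Function.Injective (LinearMap.rTensor C f.toLinearMap) :=
    Module.Flat.rTensor_preserves_injective_linearMap _ hf
  intro x y hxy
  refine h1 ?_
  rw [← h2]
  exact hxy

private lemma prime_tensor {A B C : Type u} [CommRing A] [CommRing B] [CommRing C]
    [Algebra A B] [Algebra A C] [IsDomain B] [Module.Flat A C]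
    (hdom : ∀ (K : Type u) [Field K] [Algebra A K], IsDomain (K ⊗[A] C))
    {p : B} (hp : Prime p) : Prime (algebraMap B (B ⊗[A] C) p) := by
  haveI hsp : (Ideal.span {p}).IsPrime := (Ideal.span_singleton_prime hp.ne_zero).mpr hp
  -- the residue field at p
  haveI : IsDomain (B ⧸ Ideal.span {p}) := Ideal.Quotient.isDomain _
  set L := FractionRing (B ⧸ Ideal.span {p}) with hL
  let g : B →ₐ[A] L := (IsScalarTower.toAlgHom A (B ⧸ Ideal.span {p}) L).comp
    (Ideal.Quotient.mkₐ A (Ideal.span {p}))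
  have hg : ∀ x : B, g x = 0 ↔ p ∣ x := by
    intro x
    show algebraMap (B ⧸ Ideal.span {p}) L (Ideal.Quotient.mk _ x) = 0 ↔ _
    rw [← map_zero (algebraMap (B ⧸ Ideal.span {p}) L),
      (IsFractionRing.injective (B ⧸ Ideal.span {p}) L).eq_iff,
      Ideal.Quotient.eq_zero_iff_mem, Ideal.mem_span_singleton]
  haveI : IsDomain (L ⊗[A] C) := hdom L
  let ψ := Algebra.TensorProduct.map g (AlgHom.id A C)
  -- the multiplication-by-p maps correspond under `rTensor`
  have hmul : LinearMap.rTensor C (LinearMap.mulLeft A p)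
      = LinearMap.mulLeft A (algebraMap B (B ⊗[A] C) p) := by
    refine TensorProduct.ext' fun b c => ?_
    simp [Algebra.TensorProduct.algebraMap_apply, Algebra.TensorProduct.tmul_mul_tmul]
  -- exactness of B --(·p)--> B --g--> L stays exact after ⊗ C
  have hex : Function.Exact (LinearMap.mulLeft A p) g.toLinearMap := by
    intro y
    constructor
    · intro hy
      obtain ⟨c, hc⟩ := (hg y).mp hy
      exact ⟨c, by simpa [mul_comm] using hc.symm⟩
    · rintro ⟨c, rfl⟩
      exact (hg _).mpr ⟨c, rfl⟩
  have hexT : Function.Exact (LinearMap.rTensor C (LinearMap.mulLeft A p))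
      (LinearMap.rTensor C g.toLinearMap) := Module.Flat.rTensor_exact C hex
  -- ψ agrees with rTensor g
  have hψ : ψ.toLinearMap = LinearMap.rTensor C g.toLinearMap :=
    TensorProduct.ext' fun b c => by simp [ψ]
  -- ψ kills p ⊗ 1
  have hψp : ψ (algebraMap B (B ⊗[A] C) p) = 0 := by
    have hgp : g p = 0 := (hg p).mpr dvd_rfl
    simp [ψ, Algebra.TensorProduct.algebraMap_apply, hgp]
  -- kernel of ψ is the span of p ⊗ 1
  have hker : Ideal.span {algebraMap B (B ⊗[A] C) p} = RingHom.ker ψ.toRingHom := by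
    apply le_antisymm
    · rw [Ideal.span_le, Set.singleton_subset_iff]
      exact hψp
    · intro x hx
      have hx0 : LinearMap.rTensor C g.toLinearMap x = 0 := by
        rw [← hψ]; exact hx
      obtain ⟨y, hy⟩ := (hexT x).mp hx0
      rw [Ideal.mem_span_singleton]
      exact ⟨y, by rw [← hy, hmul]; rfl⟩
  -- p ⊗ 1 is nonzero
  have hne : algebraMap B (B ⊗[A] C) p ≠ 0 := by
    set K := FractionRing B with hK
    haveI : IsDomain (K ⊗[A] C) := hdom K
    let φ := Algebra.TensorProduct.map (IsScalarTower.toAlgHom A B K) (AlgHom.id A C)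
    have hφ : Function.Injective φ := tensor_map_injective _ (IsFractionRing.injective B K)
    intro h0
    have : φ (algebraMap B (B ⊗[A] C) p) = 0 := by rw [h0, map_zero]
    have h1 : algebraMap K (K ⊗[A] C) (algebraMap B K p) = 0 := by
      rw [← this]
      simp [φ, Algebra.TensorProduct.algebraMap_apply]
    have h2 : algebraMap B K p ≠ 0 := fun h =>
      hp.ne_zero (IsFractionRing.injective B K (h.trans (map_zero _).symm))
    exact h2 ((map_eq_zero_iff _ (RingHom.injective _)).mp h1)
  have hprime : (Ideal.span {algebraMap B (B ⊗[A] C) p}).IsPrime := by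
    rw [hker]; exact RingHom.ker_isPrime _
  exact (Ideal.span_singleton_prime hne).mp hprime

end TensorLemmas

attribute [local instance] Algebra.TensorProduct.rightAlgebra

set_option maxHeartbeats 2000000 in
set_option synthInstance.maxHeartbeats 400000 in
/-- **Proposition (UFD tensor products).** If `B` is a Noetherian UFD over `A`, `C` is a flat,
finitely generated `A`-algebra, and for every field `K` over `A` the tensor product `K ⊗[A] C`
is a UFD whose units come exactly from the nonzero elements of `K`, then `B ⊗[A] C` is a UFD. -/
theorem ufd_tensor (A B C : Type u) [CommRing A] [CommRing B] [CommRing C]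
    [Algebra A B] [Algebra A C]
    [IsNoetherianRing B] [IsDomain B] [UniqueFactorizationMonoid B]
    [Module.Flat A C] [Algebra.FiniteType A C]
    (hdom : ∀ (K : Type u) [Field K] [Algebra A K], IsDomain (K ⊗[A] C))
    (hufd : ∀ (K : Type u) [Field K] [Algebra A K] [IsDomain (K ⊗[A] C)],
      UniqueFactorizationMonoid (K ⊗[A] C))
    (hunits : ∀ (K : Type u) [Field K] [Algebra A K] (z : K ⊗[A] C),
      IsUnit z ↔ ∃ c : K, c ≠ 0 ∧ algebraMap K (K ⊗[A] C) c = z) :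
    ∃ h : IsDomain (B ⊗[A] C),
      UniqueFactorizationMonoid (B ⊗[A] C) := by
  classical
  haveI hKdom : IsDomain (FractionRing B ⊗[A] C) := hdom (FractionRing B)
  haveI hKufd : UniqueFactorizationMonoid (FractionRing B ⊗[A] C) := hufd (FractionRing B)
  let φ : B ⊗[A] C →ₐ[A] FractionRing B ⊗[A] C :=
    Algebra.TensorProduct.map (IsScalarTower.toAlgHom A B (FractionRing B)) (AlgHom.id A C)
  have hφ : Function.Injective φ :=
    tensor_map_injective _ (IsFractionRing.injective B (FractionRing B))
  haveI hBCdom : IsDomain (B ⊗[A] C) := Function.Injective.isDomain φ.toRingHom hφ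
  haveI : IsNoetherianRing (B ⊗[A] C) := Algebra.FiniteType.isNoetherianRing B (B ⊗[A] C)
  haveI : WfDvdMonoid (B ⊗[A] C) := IsNoetherianRing.wfDvdMonoid
  letI : Algebra (B ⊗[A] C) (FractionRing B ⊗[A] C) := φ.toRingHom.toAlgebra
  haveI : IsScalarTower B (B ⊗[A] C) (FractionRing B ⊗[A] C) :=
    IsScalarTower.of_algebraMap_eq fun b => by
      show _ = φ (algebraMap B (B ⊗[A] C) b)
      simp [φ, Algebra.TensorProduct.algebraMap_apply, RingHom.algebraMap_toAlgebra]
  haveI : IsScalarTower A (B ⊗[A] C) (FractionRing B ⊗[A] C) :=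
    IsScalarTower.of_algebraMap_eq fun a => (φ.commutes a).symm
  haveI : IsScalarTower C (B ⊗[A] C) (FractionRing B ⊗[A] C) :=
    IsScalarTower.of_algebraMap_eq fun c => by
      show (1 : FractionRing B) ⊗ₜ[A] c = φ ((1 : B) ⊗ₜ[A] c)
      simp [φ]
  haveI hpush : Algebra.IsPushout B (FractionRing B) (B ⊗[A] C) (FractionRing B ⊗[A] C) :=
    (Algebra.IsPushout.comp_iff (R := A) (S := B) (T := FractionRing B) (R' := C)
      (S' := B ⊗[A] C) (T' := FractionRing B ⊗[A] C)).mp inferInstance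
  haveI : IsLocalizedModule (nonZeroDivisors B)
      (IsScalarTower.toAlgHom B (B ⊗[A] C) (FractionRing B ⊗[A] C)).toLinearMap :=
    (isLocalizedModule_iff_isBaseChange (nonZeroDivisors B) (FractionRing B) _).mpr hpush.out
  haveI hloc : IsLocalization (Algebra.algebraMapSubmonoid (B ⊗[A] C) (nonZeroDivisors B))
      (FractionRing B ⊗[A] C) := isLocalizedModule_iff_isLocalization.mp inferInstance
  refine ⟨hBCdom, nagata_ufd (FractionRing B ⊗[A] C)
    (Algebra.algebraMapSubmonoid (B ⊗[A] C) (nonZeroDivisors B)) ?_⟩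
  rintro s ⟨b, hb, rfl⟩
  have hb0 : b ≠ 0 := nonZeroDivisors.ne_zero hb
  obtain ⟨f, hf, hassoc⟩ := UniqueFactorizationMonoid.exists_prime_factors b hb0
  obtain ⟨v, hv⟩ := hassoc
  refine ⟨algebraMap B (B ⊗[A] C) ↑v, f.map (algebraMap B (B ⊗[A] C)),
    (v.isUnit).map _, ?_, ?_⟩
  · intro x hx
    obtain ⟨p, hpf, rfl⟩ := Multiset.mem_map.mp hx
    exact prime_tensor hdom (hf p hpf)
  · have hbv : b = ↑v * f.prod := by rw [← hv]; ring
    rw [hbv, map_mul, map_multiset_prod]
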